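/- Let α > 1 and let u_α(ρ) = ∫_{ln α}^{ρ} φ_α(s)/√(1 − φ_α(s)²) ds with φ_α(s) = (cosh s − α)/sinh s, and let u₁(ρ) = 2cosh(ρ/2). Then there exists R > 0 such that u_α(ρ) < u₁(ρ) for all ρ > R. -/

import Mathlib

private lemma core_ineq (α c σ : ℝ) (hα : 1 < α) (hσ : 0 < σ) (hc : α < c)
    (hcs : c ^ 2 - σ ^ 2 = 1) :
    4 * (c - α) ^ 2 ≤ (c + σ) * (2 * α * c - α ^ 2 - 1) := by
  nlinarith [mul_pos (mul_pos hσ hσ) (sub_pos.mpr hc), sq_nonneg (σ - c + α),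
    mul_pos hσ (sub_pos.mpr hc), sq_nonneg (c - α), mul_pos (sub_pos.mpr hc) (sub_pos.mpr hc),
    mul_pos (mul_pos (sub_pos.mpr hc) (sub_pos.mpr hc)) hσ, sq_nonneg (α - 1),
    mul_pos hσ (mul_pos (sub_pos.mpr hc) (sub_pos.mpr (lt_trans one_lt_two (by linarith : (2:ℝ) < α + 1))))]

private lemma pointwise_bound (α : ℝ) (hα : 1 < α) (s : ℝ) (hs : 0 < s) :
    ((Real.cosh s - α) / Real.sinh s) /
      Real.sqrt (1 - ((Real.cosh s - α) / Real.sinh s) ^ 2) ≤ Real.exp (s / 2) / 2 := by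
  set c := Real.cosh s with hc
  set σ := Real.sinh s with hσdef
  have hσ : 0 < σ := by rwa [hσdef, Real.sinh_pos_iff]
  set φ : ℝ := (c - α) / σ with hφdef
  set b : ℝ := Real.exp (s / 2) / 2 with hbdef
  have hb : 0 < b := by positivity
  rcases le_or_gt φ 0 with hφ | hφ
  · exact le_trans (div_nonpos_of_nonpos_of_nonneg hφ (Real.sqrt_nonneg _)) hb.le
  rcases le_or_gt (1 - φ ^ 2) 0 with hd | hd
  · rw [Real.sqrt_eq_zero'.mpr (by linarith), div_zero]
    exact hb.le
  · have hdpos : 0 < Real.sqrt (1 - φ ^ 2) := Real.sqrt_pos.mpr hd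
    rw [div_le_iff₀ hdpos]
    have hcα : α < c := by
      by_contra h
      push_neg at h
      have : φ ≤ 0 := div_nonpos_of_nonpos_of_nonneg (by linarith) hσ.le
      linarith
    have hcs : c ^ 2 - σ ^ 2 = 1 := by
      have := Real.cosh_sq_sub_sinh_sq s
      rw [← hc, ← hσdef] at this
      nlinarith [this]
    have hexp : b ^ 2 = (c + σ) / 4 := by
      rw [hbdef, div_pow, sq, ← Real.exp_add, show s / 2 + s / 2 = s by ring,
        hc, hσdef, Real.cosh_add_sinh]
      norm_num
    have hφ2 : φ ^ 2 = (c - α) ^ 2 / σ ^ 2 := by rw [hφdef, div_pow]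
    have hkey : 4 * (c - α) ^ 2 ≤ (c + σ) * (2 * α * c - α ^ 2 - 1) :=
      core_ineq α c σ hα hσ hcα hcs
    have hσ2 : (0:ℝ) < σ ^ 2 := by positivity
    have hφsq : φ ^ 2 ≤ b ^ 2 * (1 - φ ^ 2) := by
      rw [hexp, hφ2]
      have h1φ : 1 - (c - α) ^ 2 / σ ^ 2 = (σ ^ 2 - (c - α) ^ 2) / σ ^ 2 := by
        field_simp
      rw [h1φ, show (c + σ) / 4 * ((σ ^ 2 - (c - α) ^ 2) / σ ^ 2)
          = ((c + σ) * (σ ^ 2 - (c - α) ^ 2) / 4) / σ ^ 2 by ring,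
        div_le_div_iff_of_pos_right hσ2]
      nlinarith [hkey]
    calc φ = Real.sqrt (φ ^ 2) := (Real.sqrt_sq hφ.le).symm
      _ ≤ Real.sqrt (b ^ 2 * (1 - φ ^ 2)) := Real.sqrt_le_sqrt hφsq
      _ = b * Real.sqrt (1 - φ ^ 2) := by
          rw [Real.sqrt_mul (sq_nonneg b), Real.sqrt_sq hb.le]

theorem immersed_end_below_S (α : ℝ) (hα : 1 < α) :
    ∃ R : ℝ, 0 < R ∧ ∀ ρ : ℝ, R < ρ →
      (∫ s in Real.log α..ρ,
        ((Real.cosh s - α) / Real.sinh s) /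
          Real.sqrt (1 - ((Real.cosh s - α) / Real.sinh s) ^ 2)) <
        2 * Real.cosh (ρ / 2) := by
  have ha : 0 < Real.log α := Real.log_pos hα
  refine ⟨Real.log α, ha, fun ρ hρ => ?_⟩
  set a := Real.log α with hadef
  set f : ℝ → ℝ := fun s => ((Real.cosh s - α) / Real.sinh s) /
      Real.sqrt (1 - ((Real.cosh s - α) / Real.sinh s) ^ 2) with hfdef
  have hcosh : 2 * Real.cosh (ρ / 2) = Real.exp (ρ / 2) + Real.exp (-(ρ / 2)) := by
    rw [Real.cosh_eq]; ring
  by_cases hint : IntervalIntegrable f MeasureTheory.volume a ρ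
  · have hgc : Continuous fun s : ℝ => Real.exp (s / 2) / 2 := by continuity
    have hg : IntervalIntegrable (fun s : ℝ => Real.exp (s / 2) / 2)
        MeasureTheory.volume a ρ := hgc.intervalIntegrable a ρ
    have hmono : (∫ s in a..ρ, f s) ≤ ∫ s in a..ρ, Real.exp (s / 2) / 2 := by
      apply intervalIntegral.integral_mono_on hρ.le hint hg
      intro s hs
      exact pointwise_bound α hα s (lt_of_lt_of_le ha hs.1)
    have hF : ∀ s : ℝ, HasDerivAt (fun x => Real.exp (x / 2)) (Real.exp (s / 2) / 2) s := by
      intro s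
      have h1 : HasDerivAt (fun x : ℝ => x / 2) (1 / 2) s := (hasDerivAt_id s).div_const 2
      have := (Real.hasDerivAt_exp (s / 2)).comp s h1
      simpa [div_eq_mul_inv, mul_comm, Function.comp_def] using this
    have hgval : (∫ s in a..ρ, Real.exp (s / 2) / 2)
        = Real.exp (ρ / 2) - Real.exp (a / 2) :=
      intervalIntegral.integral_eq_sub_of_hasDerivAt (fun s _ => hF s) hg
    have hfin : (∫ s in a..ρ, f s) ≤ Real.exp (ρ / 2) - Real.exp (a / 2) := by
      rw [← hgval]; exact hmono
    have h1 : (0:ℝ) < Real.exp (a / 2) := Real.exp_pos _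
    have h2 : (0:ℝ) < Real.exp (-(ρ / 2)) := Real.exp_pos _
    rw [hcosh]
    linarith
  · rw [intervalIntegral.integral_undef hint]
    rw [hcosh]
    positivity
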